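/- Let n ≥ 2 and suppose in the complete graph K_n there are at least n/100 vertices each incident to at least n/100 red edges and at least n/100 green edges, under an edge 2-coloring ρ. Then there exist at least n/200 pairwise vertex-disjoint triangles in K_n each of which contains at least one red edge and at least one green edge. -/

import Mathlib

open Finset

namespace DBT

variable {n : ℕ}

def Nc (ρ : Sym2 (Fin n) → Bool) (c : Bool) (v : Fin n) : Finset (Fin n) :=
  univ.filter fun w => w ≠ v ∧ ρ s(v, w) = c

lemma mem_Nc {ρ : Sym2 (Fin n) → Bool} {c : Bool} {v w : Fin n} :
    w ∈ Nc ρ c v ↔ w ≠ v ∧ ρ s(v, w) = c := by simp [Nc]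

def Good (ρ : Sym2 (Fin n) → Bool) (t : Finset (Fin n)) : Prop :=
  t.card = 3 ∧ (∃ a ∈ t, ∃ b ∈ t, a ≠ b ∧ ρ s(a, b) = true) ∧
    (∃ a ∈ t, ∃ b ∈ t, a ≠ b ∧ ρ s(a, b) = false)

def Valid (ρ : Sym2 (Fin n) → Bool) (T : Finset (Finset (Fin n))) : Prop :=
  (∀ t ∈ T, Good ρ t) ∧ ∀ t ∈ T, ∀ t' ∈ T, t ≠ t' → Disjoint t t'

lemma valid_subset {ρ : Sym2 (Fin n) → Bool} {T T' : Finset (Finset (Fin n))}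
    (h : T' ⊆ T) (hval : Valid ρ T) : Valid ρ T' :=
  ⟨fun t ht => hval.1 t (h ht), fun t ht t' ht' hne => hval.2 t (h ht) t' (h ht') hne⟩

lemma valid_insert {ρ : Sym2 (Fin n) → Bool} {T : Finset (Finset (Fin n))}
    {t₀ : Finset (Fin n)} (hval : Valid ρ T) (hg : Good ρ t₀)
    (hd : ∀ t ∈ T, Disjoint t₀ t) : Valid ρ (insert t₀ T) := by
  constructor
  · intro t ht
    rcases mem_insert.mp ht with rfl | ht
    · exact hg
    · exact hval.1 t ht
  · intro t ht t' ht' hne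
    rcases mem_insert.mp ht with h1 | h1 <;> rcases mem_insert.mp ht' with h2 | h2
    · exact absurd (h1.trans h2.symm) hne
    · subst h1; exact hd t' h2
    · subst h2; exact (hd t h1).symm
    · exact hval.2 t h1 t' h2 hne

lemma good_mk {ρ : Sym2 (Fin n) → Bool} {c : Bool} {a b z : Fin n}
    (hab : a ≠ b) (haz : a ≠ z) (hbz : b ≠ z)
    (h1 : ρ s(a, b) = c) (h2 : ρ s(a, z) = !c) :
    Good ρ ({a, b, z} : Finset (Fin n)) := by
  refine ⟨?_, ?_, ?_⟩
  · rw [card_insert_of_notMem (by simp [hab, haz]), card_insert_of_notMem (by simp [hbz])]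
    simp
  · cases c
    · exact ⟨a, by simp, z, by simp, haz, by simpa using h2⟩
    · exact ⟨a, by simp, b, by simp, hab, h1⟩
  · cases c
    · exact ⟨a, by simp, b, by simp, hab, h1⟩
    · exact ⟨a, by simp, z, by simp, haz, by simpa using h2⟩

lemma deg_eq (ρ : Sym2 (Fin n) → Bool) (v : Fin n) (c : Bool) :
    (((univ : Finset (Sym2 (Fin n))).filter fun e => ¬ e.IsDiag).filter
      fun e => v ∈ e ∧ ρ e = c).card = (Nc ρ c v).card := by
  refine (Finset.card_bij (fun w _ => s(v, w)) ?_ ?_ ?_).symm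
  · intro w hw
    rw [mem_Nc] at hw
    simp only [mem_filter, mem_univ, true_and, Sym2.mk_isDiag_iff, Sym2.mem_iff]
    exact ⟨fun h => hw.1 h.symm, by simp, hw.2⟩
  · intro w hw w' hw' h
    exact (Sym2.congr_right.mp h)
  · intro e he
    simp only [mem_filter, mem_univ, true_and] at he
    obtain ⟨hnd, hve, hc⟩ := he
    induction e using Sym2.ind with
    | _ x y =>
      rw [Sym2.mk_isDiag_iff] at hnd
      rw [Sym2.mem_iff] at hve
      rcases hve with rfl | rfl
      · exact ⟨y, mem_Nc.mpr ⟨fun h => hnd h.symm, hc⟩, rfl⟩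
      · exact ⟨x, mem_Nc.mpr ⟨fun h => hnd h, by rwa [Sym2.eq_swap]⟩, Sym2.eq_swap⟩

lemma Ucard {ρ : Sym2 (Fin n) → Bool} {T : Finset (Finset (Fin n))} (hval : Valid ρ T) :
    (T.biUnion id).card = 3 * T.card := by
  have h := Finset.card_biUnion (s := T) (t := id) (fun x hx y hy h => hval.2 x hx y hy h)
  rw [h]
  exact (Finset.sum_congr rfl (fun t ht => (hval.1 t ht).1)).trans (by simp [mul_comm])

lemma slice {T : Finset (Finset (Fin n))}
    (hdisj : ∀ t ∈ T, ∀ t' ∈ T, t ≠ t' → Disjoint t t')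
    {X : Finset (Fin n)} (hX : X ⊆ T.biUnion id) :
    X.card = ∑ t ∈ T, (X ∩ t).card := by
  classical
  have hXeq : X = T.biUnion fun t => X ∩ t := by
    ext x
    simp only [mem_biUnion, mem_inter]
    constructor
    · intro hx
      have h2 := hX hx
      simp only [mem_biUnion, id] at h2
      obtain ⟨t, ht, hxt⟩ := h2
      exact ⟨t, ht, hx, hxt⟩
    · rintro ⟨t, _, hx, _⟩; exact hx
  conv_lhs => rw [hXeq]
  exact card_biUnion fun x hx y hy h =>
    (hdisj x hx y hy h).mono inter_subset_right inter_subset_right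

lemma biUnion_erase {T : Finset (Finset (Fin n))}
    (hdisj : ∀ t ∈ T, ∀ t' ∈ T, t ≠ t' → Disjoint t t')
    {t : Finset (Fin n)} (ht : t ∈ T) :
    (T.erase t).biUnion id = T.biUnion id \ t := by
  ext x
  simp only [mem_biUnion, mem_erase, mem_sdiff, id]
  constructor
  · rintro ⟨t', ⟨hne, ht'⟩, hx⟩
    exact ⟨⟨t', ht', hx⟩, fun hxt => disjoint_left.mp (hdisj t' ht' t ht hne) hx hxt⟩
  · rintro ⟨⟨t', ht', hx⟩, hxt⟩
    exact ⟨t', ⟨fun h => hxt (h ▸ hx), ht'⟩, hx⟩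


lemma subset_U {T : Finset (Finset (Fin n))} {t : Finset (Fin n)} (ht : t ∈ T) :
    t ⊆ T.biUnion id := Finset.subset_biUnion_of_mem id ht

lemma not_mem_Nc_color {ρ : Sym2 (Fin n) → Bool} {c : Bool} {a z : Fin n}
    (h : z ∉ Nc ρ c a) (hza : z ≠ a) : ρ s(a, z) = !c := by
  rw [mem_Nc] at h
  push_neg at h
  have := h hza
  cases c <;> cases hz : ρ s(a, z) <;> simp_all

lemma blocked {ρ : Sym2 (Fin n) → Bool} {T : Finset (Finset (Fin n))}
    (hval : Valid ρ T) (hmax : ∀ T', Valid ρ T' → T'.card ≤ T.card)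
    {a : Fin n} (haU : a ∉ T.biUnion id) :
    (Nc ρ true a ⊆ T.biUnion id) ∨ (Nc ρ false a ⊆ T.biUnion id) := by
  by_contra h
  push_neg at h
  obtain ⟨r, hr, hrU⟩ := not_subset.mp h.1
  obtain ⟨g, hg, hgU⟩ := not_subset.mp h.2
  rw [mem_Nc] at hr hg
  have hrg : r ≠ g := by
    rintro rfl
    rw [hr.2] at hg
    exact absurd hg.2 (by simp)
  have hgood : Good ρ ({a, r, g} : Finset (Fin n)) :=
    good_mk (c := true) hr.1.symm hg.1.symm hrg hr.2 (by simpa using hg.2)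
  have hdisj : ∀ t ∈ T, Disjoint ({a, r, g} : Finset (Fin n)) t := by
    intro t ht
    rw [disjoint_left]
    intro x hx hxt
    have hxU : x ∈ T.biUnion id := subset_U ht hxt
    rcases mem_insert.mp hx with rfl | hx
    · exact haU hxU
    rcases mem_insert.mp hx with rfl | hx
    · exact hrU hxU
    · rw [mem_singleton] at hx; subst hx; exact hgU hxU
  have hnm : ({a, r, g} : Finset (Fin n)) ∉ T := by
    intro hm
    exact haU (subset_U hm (by simp))
  have := hmax _ (valid_insert hval hgood hdisj)
  rw [card_insert_of_notMem hnm] at this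
  omega

lemma mixed {ρ : Sym2 (Fin n) → Bool} {U : Finset (Fin n)} {a a' : Fin n}
    (hne : a ≠ a') (haU : a ∉ U) (ha'U : a' ∉ U)
    (h1 : Nc ρ true a ⊆ U) (h2 : Nc ρ false a' ⊆ U) : False := by
  have hA : a' ∉ Nc ρ true a := fun h => ha'U (h1 h)
  have hB : a ∉ Nc ρ false a' := fun h => haU (h2 h)
  have e1 := not_mem_Nc_color hA hne.symm
  have e2 := not_mem_Nc_color hB hne
  rw [Sym2.eq_swap] at e2
  rw [e1] at e2
  simp at e2

lemma good_vertex {ρ : Sym2 (Fin n) → Bool} {t : Finset (Fin n)} (hg : Good ρ t) :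
    ∃ p ∈ t, ∃ q ∈ t, ∃ r ∈ t, p ≠ q ∧ p ≠ r ∧ q ≠ r ∧
      ρ s(p, q) = true ∧ ρ s(p, r) = false := by
  obtain ⟨hc, ⟨x, hx, y, hy, hxy, hred⟩, ⟨x', hx', y', hy', hxy', hgreen⟩⟩ := hg
  by_cases h1 : x' = x
  · subst h1
    refine ⟨x', hx', y, hy, y', hy', hxy, hxy', ?_, hred, hgreen⟩
    rintro rfl; rw [hred] at hgreen; simp at hgreen
  by_cases h2 : x' = y
  · subst h2
    have hr' : ρ s(x', x) = true := by rwa [Sym2.eq_swap]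
    refine ⟨x', hx', x, hx, y', hy', hxy.symm, hxy', ?_, hr', hgreen⟩
    rintro rfl; rw [hr'] at hgreen; simp at hgreen
  by_cases h3 : y' = x
  · subst h3
    have hg' : ρ s(y', x') = false := by rwa [Sym2.eq_swap]
    refine ⟨y', hy', y, hy, x', hx', hxy, fun h => h1 h.symm, ?_, hred, hg'⟩
    rintro rfl; rw [hred] at hg'; simp at hg'
  by_cases h4 : y' = y
  · subst h4
    have hr' : ρ s(y', x) = true := by rwa [Sym2.eq_swap]
    have hg' : ρ s(y', x') = false := by rwa [Sym2.eq_swap]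
    refine ⟨y', hy', x, hx, x', hx', hxy.symm, hxy'.symm, ?_, hr', hg'⟩
    rintro rfl; rw [hr'] at hg'; simp at hg'
  cases hd : ρ s(x, y')
  · exact ⟨x, hx, y, hy, y', hy', hxy, fun h => h3 h.symm, fun h => h4 h.symm, hred, hd⟩
  · have hr' : ρ s(y', x) = true := by rwa [Sym2.eq_swap]
    have hg' : ρ s(y', x') = false := by rwa [Sym2.eq_swap]
    exact ⟨y', hy', x, hx, x', hx', h3, hxy'.symm, fun h => h1 h.symm, hr', hg'⟩


lemma swap {ρ : Sym2 (Fin n) → Bool} {T : Finset (Finset (Fin n))}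
    {t newt : Finset (Fin n)} {X : Finset (Fin n)} {z : Fin n}
    (hval : Valid ρ T) (ht : t ∈ T) (hg : Good ρ newt)
    (hsub : ∀ x ∈ newt, x ∈ t ∨ x ∉ T.biUnion id)
    (hzm : z ∈ newt) (hzU : z ∉ T.biUnion id)
    (hcard : (newt ∩ X).card < (t ∩ X).card)
    (hmin : ∀ T', Valid ρ T' → T'.card = T.card →
      ((T.biUnion id) ∩ X).card ≤ ((T'.biUnion id) ∩ X).card) : False := by
  classical
  set U := T.biUnion id with hUdef
  have htU : t ⊆ U := subset_U ht
  set T' : Finset (Finset (Fin n)) := insert newt (T.erase t) with hT'def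
  have hnewtT : newt ∉ T := fun hm => hzU (subset_U hm hzm)
  have hval' : Valid ρ T' := by
    refine valid_insert (valid_subset (erase_subset t T) hval) hg ?_
    intro t'' ht''
    rw [disjoint_left]
    intro x hx hxt''
    have ht''T := mem_of_mem_erase ht''
    rcases hsub x hx with hxt | hxU
    · exact disjoint_left.mp (hval.2 t ht t'' ht''T (ne_of_mem_erase ht'').symm) hxt hxt''
    · exact hxU (subset_U ht''T hxt'')
  have hcard' : T'.card = T.card := by
    rw [hT'def, card_insert_of_notMem (fun h => hnewtT (mem_of_mem_erase h)),
      card_erase_of_mem ht]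
    have : 1 ≤ T.card := card_pos.mpr ⟨t, ht⟩
    omega
  have hU' : T'.biUnion id = newt ∪ (U \ t) := by
    rw [hT'def, biUnion_insert, biUnion_erase hval.2 ht]
    rfl
  -- card comparisons
  have hsplit : (U ∩ X).card = (t ∩ X).card + ((U \ t) ∩ X).card := by
    have hun : (t ∩ X) ∪ ((U \ t) ∩ X) = U ∩ X := by
      rw [← union_inter_distrib_right, union_sdiff_of_subset htU]
    have hdis : Disjoint (t ∩ X) ((U \ t) ∩ X) := by
      rw [disjoint_left]
      intro x hx hx'
      exact (mem_sdiff.mp (mem_inter.mp hx').1).2 (mem_inter.mp hx).1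
    rw [← hun, card_union_of_disjoint hdis]
  have hbound : ((T'.biUnion id) ∩ X).card ≤ (newt ∩ X).card + ((U \ t) ∩ X).card := by
    rw [hU', union_inter_distrib_right]
    exact card_union_le _ _
  have := hmin T' hval' hcard'
  omega


lemma augment {ρ : Sym2 (Fin n) → Bool} {T : Finset (Finset (Fin n))}
    (hval : Valid ρ T) (hmax : ∀ T', Valid ρ T' → T'.card ≤ T.card)
    {a a' : Fin n} {c : Bool} (hne : a ≠ a')
    (haU : a ∉ T.biUnion id) (ha'U : a' ∉ T.biUnion id)
    (hba : Nc ρ c a ⊆ T.biUnion id) (hba' : Nc ρ c a' ⊆ T.biUnion id)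
    (hda : n ≤ 100 * (Nc ρ c a).card) (hda' : n ≤ 100 * (Nc ρ c a').card)
    (hcon : 200 * T.card < n) : False := by
  classical
  set U := T.biUnion id with hUdef
  have hU3 : U.card = 3 * T.card := Ucard hval
  have hNa : 2 * T.card + 1 ≤ (Nc ρ c a).card := by omega
  have hNa' : 2 * T.card + 1 ≤ (Nc ρ c a').card := by omega
  by_cases hex : ∃ t ∈ T, ∃ u ∈ Nc ρ c a ∩ t, ∃ u' ∈ Nc ρ c a' ∩ t, u ≠ u'
  · obtain ⟨t, ht, u, hu, u', hu', huu'⟩ := hex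
    have htU : t ⊆ U := subset_U ht
    have hut : u ∈ t := (mem_inter.mp hu).2
    have hu't : u' ∈ t := (mem_inter.mp hu').2
    have huN : u ∈ Nc ρ c a := (mem_inter.mp hu).1
    have hu'N : u' ∈ Nc ρ c a' := (mem_inter.mp hu').1
    have huU : u ∈ U := htU hut
    have hu'U : u' ∈ U := htU hu't
    -- two fresh vertices
    have hT1 : 1 ≤ T.card := card_pos.mpr ⟨t, ht⟩
    have hR : 1 < ((univ : Finset (Fin n)) \ (U ∪ {a, a'})).card := by
      have h1 : (U ∪ {a, a'}).card ≤ 3 * T.card + 2 := by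
        refine le_trans (card_union_le _ _) ?_
        have : ({a, a'} : Finset (Fin n)).card ≤ 2 := card_insert_le _ _ |>.trans (by simp)
        omega
      have h2 : ((univ : Finset (Fin n)) \ (U ∪ {a, a'})).card
          = n - (U ∪ {a, a'}).card := by
        rw [card_sdiff_of_subset (subset_univ _), card_univ, Fintype.card_fin]
      omega
    obtain ⟨z, hz, z', hz', hzz'⟩ := one_lt_card.mp hR
    simp only [mem_sdiff, mem_union, mem_insert, mem_singleton, mem_univ, true_and,
      not_or] at hz hz'
    obtain ⟨hzU, hza, hza'⟩ := hz
    obtain ⟨hz'U, hz'a, hz'a'⟩ := hz'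
    -- colors
    rw [mem_Nc] at huN hu'N
    have hcaz : ρ s(a, z) = !c := not_mem_Nc_color (fun h => hzU (hba h)) hza
    have hcaz' : ρ s(a', z') = !c := not_mem_Nc_color (fun h => hz'U (hba' h)) hz'a'
    have hg1 : Good ρ ({a, u, z} : Finset (Fin n)) :=
      good_mk huN.1.symm (fun h => hza h.symm) (fun h => hzU (h ▸ huU)) huN.2 hcaz
    have hg2 : Good ρ ({a', u', z'} : Finset (Fin n)) :=
      good_mk hu'N.1.symm (fun h => hz'a' h.symm) (fun h => hz'U (h ▸ hu'U)) hu'N.2 hcaz'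
    -- build family
    have hdisj2 : ∀ t'' ∈ T.erase t, Disjoint ({a', u', z'} : Finset (Fin n)) t'' := by
      intro t'' ht''
      have ht''T := mem_of_mem_erase ht''
      rw [disjoint_left]
      intro x hx hxt''
      rcases mem_insert.mp hx with rfl | hx
      · exact ha'U (subset_U ht''T hxt'')
      rcases mem_insert.mp hx with rfl | hx
      · exact disjoint_left.mp (hval.2 t ht t'' ht''T (ne_of_mem_erase ht'').symm) hu't hxt''
      · rw [mem_singleton] at hx; subst hx; exact hz'U (subset_U ht''T hxt'')
    have hvalI : Valid ρ (insert ({a', u', z'} : Finset (Fin n)) (T.erase t)) :=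
      valid_insert (valid_subset (erase_subset t T) hval) hg2 hdisj2
    have hdisj1 : ∀ t'' ∈ insert ({a', u', z'} : Finset (Fin n)) (T.erase t),
        Disjoint ({a, u, z} : Finset (Fin n)) t'' := by
      intro t'' ht''
      rcases mem_insert.mp ht'' with rfl | ht''
      · rw [disjoint_left]
        intro x hx hxt''
        have hx4 : x = a' ∨ x = u' ∨ x = z' := by simpa using hxt''
        have hx3 : x = a ∨ x = u ∨ x = z := by simpa using hx
        rcases hx3 with h3 | h3 | h3 <;> rcases hx4 with h4 | h4 | h4 <;>
          [ exact hne (h3.symm.trans h4);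
            exact haU ((h3.symm.trans h4).symm ▸ hu'U);
            exact hz'a (h3.symm.trans h4).symm;
            exact ha'U ((h3.symm.trans h4) ▸ huU);
            exact huu' (h3.symm.trans h4);
            exact hz'U ((h3.symm.trans h4) ▸ huU);
            exact hza' (h3.symm.trans h4);
            exact hzU ((h3.symm.trans h4).symm ▸ hu'U);
            exact hzz' (h3.symm.trans h4)]
      · have ht''T := mem_of_mem_erase ht''
        rw [disjoint_left]
        intro x hx hxt''
        rcases mem_insert.mp hx with rfl | hx
        · exact haU (subset_U ht''T hxt'')
        rcases mem_insert.mp hx with rfl | hx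
        · exact disjoint_left.mp (hval.2 t ht t'' ht''T (ne_of_mem_erase ht'').symm) hut hxt''
        · rw [mem_singleton] at hx; subst hx; exact hzU (subset_U ht''T hxt'')
    have hvalF := valid_insert hvalI hg1 hdisj1
    have hm1 : ({a', u', z'} : Finset (Fin n)) ∉ T.erase t := by
      intro hm
      exact hz'U (subset_U (mem_of_mem_erase hm) (by simp))
    have hm2 : ({a, u, z} : Finset (Fin n)) ∉
        insert ({a', u', z'} : Finset (Fin n)) (T.erase t) := by
      intro hm
      rcases mem_insert.mp hm with heq | hm
      · have h0 : a ∈ ({a', u', z'} : Finset (Fin n)) := heq ▸ (by simp)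
        have h4 : a = a' ∨ a = u' ∨ a = z' := by simpa using h0
        rcases h4 with h4 | h4 | h4
        · exact hne h4
        · exact haU (h4.symm ▸ hu'U)
        · exact hz'a h4.symm
      · exact hzU (subset_U (mem_of_mem_erase hm) (by simp))
    have hcardF := hmax _ hvalF
    rw [card_insert_of_notMem hm2, card_insert_of_notMem hm1, card_erase_of_mem ht]
      at hcardF
    omega
  · push_neg at hex
    have hbound : ∀ t ∈ T, (Nc ρ c a ∩ t).card + (Nc ρ c a' ∩ t).card ≤ 3 := by
      intro t ht
      have htc : t.card = 3 := (hval.1 t ht).1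
      rcases (Nc ρ c a ∩ t).eq_empty_or_nonempty with he | ⟨u₀, hu₀⟩
      · have h2 : (Nc ρ c a' ∩ t).card ≤ t.card := card_le_card inter_subset_right
        rw [he]
        simp
        omega
      · rcases (Nc ρ c a' ∩ t).eq_empty_or_nonempty with he' | ⟨u₀', hu₀'⟩
        · have h2 : (Nc ρ c a ∩ t).card ≤ t.card := card_le_card inter_subset_right
          rw [he']
          simp
          omega
        · have h1 : Nc ρ c a ∩ t ⊆ {u₀'} := fun u hu =>
            mem_singleton.mpr (hex t ht u hu u₀' hu₀')
          have h2 : Nc ρ c a' ∩ t ⊆ {u₀} := fun u' hu' =>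
            mem_singleton.mpr (hex t ht u₀ hu₀ u' hu').symm
          have := card_le_card h1
          have := card_le_card h2
          simp only [card_singleton] at *
          omega
    have hsum : (Nc ρ c a).card + (Nc ρ c a').card ≤ 3 * T.card := by
      rw [slice hval.2 hba, slice hval.2 hba', ← Finset.sum_add_distrib]
      calc ∑ t ∈ T, ((Nc ρ c a ∩ t).card + (Nc ρ c a' ∩ t).card)
          ≤ ∑ _t ∈ T, 3 := Finset.sum_le_sum hbound
        _ = 3 * T.card := by simp [mul_comm]
    omega

end DBT




/-- if in a 2-edge-coloring (`true` = red, `false` = green) of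
the complete graph on `n ≥ 2` vertices at least `n/100` vertices are incident
to at least `n/100` red edges and at least `n/100` green edges, then there are
at least `n/200` pairwise vertex-disjoint triangles each containing at least
one red edge and at least one green edge. -/
theorem disjoint_bichromatic_triangles (n : ℕ) (hn : 2 ≤ n)
    (ρ : Sym2 (Fin n) → Bool)
    (E : Finset (Sym2 (Fin n)))
    (hE : E = Finset.univ.filter (fun e => ¬ e.IsDiag))
    (hvert : n ≤ 100 * (Finset.univ.filter (fun v : Fin n =>
      n ≤ 100 * (E.filter (fun e => v ∈ e ∧ ρ e = true)).card ∧
      n ≤ 100 * (E.filter (fun e => v ∈ e ∧ ρ e = false)).card)).card) :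
    ∃ T : Finset (Finset (Fin n)),
      (∀ t ∈ T, t.card = 3) ∧
      ((T : Set (Finset (Fin n))).Pairwise fun t t' => Disjoint t t') ∧
      (∀ t ∈ T,
        (∃ a ∈ t, ∃ b ∈ t, a ≠ b ∧ ρ s(a, b) = true) ∧
        (∃ a ∈ t, ∃ b ∈ t, a ≠ b ∧ ρ s(a, b) = false)) ∧
      n ≤ 200 * T.card := by
  classical
  set Sset : Finset (Fin n) := Finset.univ.filter (fun v : Fin n =>
      n ≤ 100 * (E.filter (fun e => v ∈ e ∧ ρ e = true)).card ∧
      n ≤ 100 * (E.filter (fun e => v ∈ e ∧ ρ e = false)).card) with hSdef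
  obtain ⟨Tm, hTmF, hTmax0⟩ := Finset.exists_max_image
    (Finset.univ.filter (fun T : Finset (Finset (Fin n)) => DBT.Valid ρ T)) Finset.card
    ⟨∅, Finset.mem_filter.mpr ⟨Finset.mem_univ _, by simp [DBT.Valid]⟩⟩
  obtain ⟨T, hTF, hTmin0⟩ := Finset.exists_min_image
    ((Finset.univ.filter (fun T : Finset (Finset (Fin n)) => DBT.Valid ρ T)).filter
      (fun T' => T'.card = Tm.card))
    (fun T' => ((T'.biUnion id) ∩ Sset).card)
    ⟨Tm, Finset.mem_filter.mpr ⟨hTmF, rfl⟩⟩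
  obtain ⟨hTF1, hkT⟩ := Finset.mem_filter.mp hTF
  have hvalT : DBT.Valid ρ T := (Finset.mem_filter.mp hTF1).2
  have hmax : ∀ T', DBT.Valid ρ T' → T'.card ≤ T.card := by
    intro T' h
    rw [hkT]
    exact hTmax0 T' (Finset.mem_filter.mpr ⟨Finset.mem_univ _, h⟩)
  have hmin : ∀ T', DBT.Valid ρ T' → T'.card = T.card →
      ((T.biUnion id) ∩ Sset).card ≤ ((T'.biUnion id) ∩ Sset).card := by
    intro T' h hc
    exact hTmin0 T' (Finset.mem_filter.mpr
      ⟨Finset.mem_filter.mpr ⟨Finset.mem_univ _, h⟩, hc.trans hkT⟩)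
  have hSdeg : ∀ v ∈ Sset, ∀ c, n ≤ 100 * (DBT.Nc ρ c v).card := by
    intro v hv c
    rw [hSdef, Finset.mem_filter] at hv
    obtain ⟨-, h1, h2⟩ := hv
    rw [hE, DBT.deg_eq] at h1 h2
    cases c
    · exact h2
    · exact h1
  refine ⟨T, fun t ht => (hvalT.1 t ht).1, ?_,
    fun t ht => ⟨(hvalT.1 t ht).2.1, (hvalT.1 t ht).2.2⟩, ?_⟩
  · intro t ht t' ht' hne
    exact hvalT.2 t (Finset.mem_coe.mp ht) t' (Finset.mem_coe.mp ht') hne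
  by_contra hcon0
  push_neg at hcon0
  set U := T.biUnion id with hUdef
  have hU3 : U.card = 3 * T.card := DBT.Ucard hvalT
  have hA1 : ∀ a ∈ Sset, ∀ a' ∈ Sset, a ∉ U → a' ∉ U → a = a' := by
    intro a ha a' ha' haU ha'U
    by_contra hne
    rcases DBT.blocked hvalT hmax haU with hba | hba <;>
      rcases DBT.blocked hvalT hmax ha'U with hba' | hba'
    · exact DBT.augment hvalT hmax hne haU ha'U hba hba'
        (hSdeg a ha true) (hSdeg a' ha' true) hcon0
    · exact DBT.mixed hne haU ha'U hba hba'
    · exact DBT.mixed (Ne.symm hne) ha'U haU hba' hba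
    · exact DBT.augment hvalT hmax hne haU ha'U hba hba'
        (hSdeg a ha false) (hSdeg a' ha' false) hcon0
  have hAcard : (Sset \ U).card ≤ 1 := by
    rw [Finset.card_le_one]
    intro a ha b hb
    rw [Finset.mem_sdiff] at ha hb
    exact hA1 a ha.1 b hb.1 ha.2 hb.2
  have hfresh : T.Nonempty → ∃ z, z ∉ U ∧ z ∉ Sset := by
    intro hTne
    have hk1 : 1 ≤ T.card := Finset.card_pos.mpr hTne
    have h1 : (U ∪ Sset).card ≤ 3 * T.card + 1 := by
      rw [← Finset.union_sdiff_self_eq_union]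
      refine le_trans (Finset.card_union_le _ _) ?_
      omega
    have h2 : 0 < ((Finset.univ : Finset (Fin n)) \ (U ∪ Sset)).card := by
      rw [Finset.card_sdiff_of_subset (Finset.subset_univ _), Finset.card_univ, Fintype.card_fin]
      omega
    obtain ⟨z, hz⟩ := Finset.card_pos.mp h2
    rw [Finset.mem_sdiff, Finset.mem_union] at hz
    exact ⟨z, fun h => hz.2 (Or.inl h), fun h => hz.2 (Or.inr h)⟩
  have hS2 : ∀ t ∈ T, (t ∩ Sset).card ≤ 2 := by
    intro t ht
    by_contra hc3
    push_neg at hc3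
    have htc : t.card = 3 := (hvalT.1 t ht).1
    have heq : t ∩ Sset = t :=
      Finset.eq_of_subset_of_card_le Finset.inter_subset_left (by omega)
    obtain ⟨z, hzU, hzS⟩ := hfresh ⟨t, ht⟩
    obtain ⟨p, hp, q, hq, r, hr, hpq, hpr, hqr, hPQ, hPR⟩ :=
      DBT.good_vertex (hvalT.1 t ht)
    have hzt : ∀ x, x ∈ t → z ≠ x := fun x hx h => hzU (h.symm ▸ DBT.subset_U ht hx)
    cases hd : ρ s(p, z)
    · have hg : DBT.Good ρ {p, q, z} :=
        DBT.good_mk (c := true) hpq (fun h => hzt p hp h.symm)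
          (fun h => hzt q hq h.symm) hPQ (by simpa using hd)
      refine DBT.swap hvalT ht hg ?_
        (by simp : z ∈ ({p, q, z} : Finset (Fin n))) hzU ?_ hmin
      · intro x hx
        have hx3 : x = p ∨ x = q ∨ x = z := by simpa using hx
        rcases hx3 with rfl | rfl | rfl
        · exact Or.inl hp
        · exact Or.inl hq
        · exact Or.inr hzU
      · have h1 : ({p, q, z} : Finset (Fin n)) ∩ Sset ⊆ {p, q} := by
          intro x hx
          rw [Finset.mem_inter] at hx
          have hx3 : x = p ∨ x = q ∨ x = z := by simpa using hx.1
          rcases hx3 with rfl | rfl | rfl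
          · simp
          · simp
          · exact absurd hx.2 hzS
        have h2 := Finset.card_le_card h1
        have h3 : ({p, q} : Finset (Fin n)).card ≤ 2 :=
          le_trans (Finset.card_insert_le _ _) (by simp)
        rw [heq, htc]
        omega
    · have hg : DBT.Good ρ {p, r, z} :=
        DBT.good_mk (c := false) hpr (fun h => hzt p hp h.symm)
          (fun h => hzt r hr h.symm) hPR (by simpa using hd)
      refine DBT.swap hvalT ht hg ?_
        (by simp : z ∈ ({p, r, z} : Finset (Fin n))) hzU ?_ hmin
      · intro x hx
        have hx3 : x = p ∨ x = r ∨ x = z := by simpa using hx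
        rcases hx3 with rfl | rfl | rfl
        · exact Or.inl hp
        · exact Or.inl hr
        · exact Or.inr hzU
      · have h1 : ({p, r, z} : Finset (Fin n)) ∩ Sset ⊆ {p, r} := by
          intro x hx
          rw [Finset.mem_inter] at hx
          have hx3 : x = p ∨ x = r ∨ x = z := by simpa using hx.1
          rcases hx3 with rfl | rfl | rfl
          · simp
          · simp
          · exact absurd hx.2 hzS
        have h2 := Finset.card_le_card h1
        have h3 : ({p, r} : Finset (Fin n)).card ≤ 2 :=
          le_trans (Finset.card_insert_le _ _) (by simp)
        rw [heq, htc]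
        omega
  have hUS : (U ∩ Sset).card ≤ 2 * T.card := by
    rw [DBT.slice hvalT.2 (Finset.inter_subset_left : U ∩ Sset ⊆ U)]
    calc ∑ t ∈ T, ((U ∩ Sset) ∩ t).card ≤ ∑ _t ∈ T, 2 := by
          refine Finset.sum_le_sum ?_
          intro t ht
          refine le_trans (Finset.card_le_card ?_) (hS2 t ht)
          intro x hx
          simp only [Finset.mem_inter] at hx ⊢
          exact ⟨hx.2, hx.1.2⟩
      _ = 2 * T.card := by simp [mul_comm]
  rcases (Sset \ U).eq_empty_or_nonempty with hAe | ⟨a, haA⟩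
  · have hSsub : Sset ⊆ U := by rwa [Finset.sdiff_eq_empty_iff_subset] at hAe
    have hle : Sset.card ≤ (U ∩ Sset).card :=
      Finset.card_le_card (fun x hx => Finset.mem_inter.mpr ⟨hSsub hx, hx⟩)
    omega
  · obtain ⟨haS, haU⟩ := Finset.mem_sdiff.mp haA
    have hSsing : Sset.card ≤ (U ∩ Sset).card + 1 := by
      have hsub : Sset ⊆ (U ∩ Sset) ∪ {a} := by
        intro x hx
        by_cases hxU : x ∈ U
        · exact Finset.mem_union_left _ (Finset.mem_inter.mpr ⟨hxU, hx⟩)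
        · exact Finset.mem_union_right _
            (Finset.mem_singleton.mpr (hA1 x hx a haS hxU haU))
      refine le_trans (Finset.card_le_card hsub)
        (le_trans (Finset.card_union_le _ _) (by simp))
    obtain ⟨c, hba⟩ : ∃ c, DBT.Nc ρ c a ⊆ U := by
      rcases DBT.blocked hvalT hmax haU with h | h
      exacts [⟨true, h⟩, ⟨false, h⟩]
    have hdeg := hSdeg a haS c
    have hNcard : 2 * T.card + 1 ≤ (DBT.Nc ρ c a).card := by omega
    obtain ⟨t, ht, ht3⟩ : ∃ t ∈ T, 3 ≤ (DBT.Nc ρ c a ∩ t).card := by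
      by_contra h
      push_neg at h
      have h2 : (DBT.Nc ρ c a).card ≤ 2 * T.card := by
        rw [DBT.slice hvalT.2 hba]
        calc ∑ t ∈ T, (DBT.Nc ρ c a ∩ t).card ≤ ∑ _t ∈ T, 2 :=
            Finset.sum_le_sum (fun t ht => by have := h t ht; omega)
          _ = 2 * T.card := by simp [mul_comm]
      omega
    have htc : t.card = 3 := (hvalT.1 t ht).1
    have htN : t ⊆ DBT.Nc ρ c a := by
      have h2 : DBT.Nc ρ c a ∩ t = t :=
        Finset.eq_of_subset_of_card_le Finset.inter_subset_right (by omega)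
      intro x hx
      have hx2 : x ∈ DBT.Nc ρ c a ∩ t := by rw [h2]; exact hx
      exact (Finset.mem_inter.mp hx2).1
    by_cases htS1 : (t ∩ Sset).card ≤ 1
    · have hk1 : 1 ≤ T.card := Finset.card_pos.mpr ⟨t, ht⟩
      have h5 : (U ∩ Sset).card ≤ 2 * T.card - 1 := by
        rw [DBT.slice hvalT.2 (Finset.inter_subset_left : U ∩ Sset ⊆ U)]
        rw [← Finset.add_sum_erase T _ ht]
        have h6 : ((U ∩ Sset) ∩ t).card ≤ 1 := by
          refine le_trans (Finset.card_le_card ?_) htS1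
          intro x hx
          simp only [Finset.mem_inter] at hx ⊢
          exact ⟨hx.2, hx.1.2⟩
        have h7 : ∑ t' ∈ T.erase t, ((U ∩ Sset) ∩ t').card ≤ 2 * (T.card - 1) := by
          calc ∑ t' ∈ T.erase t, ((U ∩ Sset) ∩ t').card ≤ ∑ x ∈ T.erase t, 2 := by
                refine Finset.sum_le_sum ?_
                intro t' ht'
                refine le_trans (Finset.card_le_card ?_)
                  (hS2 t' (Finset.mem_of_mem_erase ht'))
                intro x hx
                simp only [Finset.mem_inter] at hx ⊢
                exact ⟨hx.2, hx.1.2⟩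
            _ = 2 * (T.card - 1) := by
              rw [Finset.sum_const, Finset.card_erase_of_mem ht]
              simp [mul_comm]
        omega
      omega
    · push_neg at htS1
      obtain ⟨u, hut, huS⟩ : ∃ u ∈ t, u ∉ Sset := by
        by_contra h
        push_neg at h
        have heq2 : t ∩ Sset = t := Finset.inter_eq_left.mpr h
        have h9 := hS2 t ht
        rw [heq2, htc] at h9
        omega
      obtain ⟨z, hzU, hzS⟩ := hfresh ⟨t, ht⟩
      have huN := DBT.mem_Nc.mp (htN hut)
      have hza : z ≠ a := fun h => hzS (h.symm ▸ haS)
      have hcaz : ρ s(a, z) = !c := DBT.not_mem_Nc_color (fun h => hzU (hba h)) hza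
      have huU : u ∈ U := DBT.subset_U ht hut
      have hg : DBT.Good ρ {a, u, z} :=
        DBT.good_mk huN.1.symm hza.symm (fun h => hzU (h ▸ huU)) huN.2 hcaz
      refine DBT.swap hvalT ht hg ?_
        (by simp : z ∈ ({a, u, z} : Finset (Fin n))) hzU ?_ hmin
      · intro x hx
        have hx3 : x = a ∨ x = u ∨ x = z := by simpa using hx
        rcases hx3 with rfl | rfl | rfl
        · exact Or.inr haU
        · exact Or.inl hut
        · exact Or.inr hzU
      · have h1 : ({a, u, z} : Finset (Fin n)) ∩ Sset ⊆ {a} := by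
          intro x hx
          rw [Finset.mem_inter] at hx
          have hx3 : x = a ∨ x = u ∨ x = z := by simpa using hx.1
          rcases hx3 with rfl | rfl | rfl
          · simp
          · exact absurd hx.2 huS
          · exact absurd hx.2 hzS
        have h2 := Finset.card_le_card h1
        simp only [Finset.card_singleton] at h2
        omega
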